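/- For every integer n ≥ 17 and every real p ≥ 2, one has 2·(2^p+(n−2)^p)^(2/p) + (n−4)·(1+(n−2)^p)^(2/p) > (n−2)·(4^p+(n−3)^p)^(2/p). -/

import Mathlib

theorem stmt_7 (n : ℕ) (hn : 17 ≤ n) (p : ℝ) (hp : 2 ≤ p) :
    2 * ((2 : ℝ) ^ p + ((n : ℝ) - 2) ^ p) ^ (2 / p) +
      ((n : ℝ) - 4) * ((1 : ℝ) + ((n : ℝ) - 2) ^ p) ^ (2 / p) >
      ((n : ℝ) - 2) * ((4 : ℝ) ^ p + ((n : ℝ) - 3) ^ p) ^ (2 / p) := by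
  have hp0 : (0:ℝ) < p := by linarith
  have hn' : (17:ℝ) ≤ (n:ℝ) := by exact_mod_cast hn
  set a : ℝ := (n:ℝ) - 2 with ha
  have ha15 : (15:ℝ) ≤ a := by simp [ha]; linarith
  have ha0 : (0:ℝ) < a := by linarith
  have han3 : (n:ℝ) - 3 = a - 1 := by rw [ha]; ring
  have hexp0 : (0:ℝ) < 2 / p := by positivity
  -- key inequality: 4^p + (a-1)^p ≤ a^p
  have key : (4:ℝ) ^ p + (a - 1) ^ p ≤ a ^ p := by
    have h4a0 : (0:ℝ) < 4 / a := by positivity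
    have h4a1 : (4:ℝ) / a ≤ 1 := by rw [div_le_one ha0]; linarith
    have hb0 : (0:ℝ) < (a - 1) / a := by
      apply div_pos; linarith; exact ha0
    have hb1 : (a - 1) / a ≤ 1 := by rw [div_le_one ha0]; linarith
    have h1 : ((4:ℝ)/a) ^ p ≤ ((4:ℝ)/a) ^ (2:ℝ) :=
      Real.rpow_le_rpow_of_exponent_ge h4a0 h4a1 hp
    have h2 : ((a-1)/a) ^ p ≤ ((a-1)/a) ^ (2:ℝ) :=
      Real.rpow_le_rpow_of_exponent_ge hb0 hb1 hp
    have h3 : ((4:ℝ)/a) ^ (2:ℝ) + ((a-1)/a) ^ (2:ℝ) ≤ 1 := by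
      rw [Real.rpow_two, Real.rpow_two, div_pow, div_pow,
        ← add_div, div_le_one (by positivity)]
      nlinarith
    have hsum : ((4:ℝ)/a) ^ p + ((a-1)/a) ^ p ≤ 1 := by linarith
    have e1 : ((4:ℝ)/a) ^ p = 4 ^ p / a ^ p := Real.div_rpow (by norm_num) ha0.le p
    have e2 : ((a-1)/a) ^ p = (a-1) ^ p / a ^ p := Real.div_rpow (by linarith) ha0.le p
    have hap : (0:ℝ) < a ^ p := Real.rpow_pos_of_pos ha0 p
    rw [e1, e2, ← add_div, div_le_one hap] at hsum
    linarith
  have hap_eq : (a ^ p) ^ (2 / p) = a ^ 2 := by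
    rw [← Real.rpow_natCast a 2, ← Real.rpow_mul ha0.le]
    congr 1
    field_simp
    norm_num
  have hap0 : (0:ℝ) ≤ a ^ p := (Real.rpow_pos_of_pos ha0 p).le
  -- RHS bound
  have hR : ((4:ℝ) ^ p + ((n:ℝ) - 3) ^ p) ^ (2 / p) ≤ a ^ 2 := by
    rw [han3, ← hap_eq]
    have h4 : (0:ℝ) ≤ (4:ℝ) ^ p := (Real.rpow_pos_of_pos (by norm_num) p).le
    have h5 : (0:ℝ) ≤ (a - 1) ^ p := Real.rpow_nonneg (by linarith) p
    exact Real.rpow_le_rpow (by linarith) key hexp0.le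
  -- LHS bounds
  have hL1 : (a:ℝ) ^ 2 < ((2:ℝ) ^ p + a ^ p) ^ (2 / p) := by
    rw [← hap_eq]
    apply Real.rpow_lt_rpow hap0 _ hexp0
    have : (0:ℝ) < (2:ℝ) ^ p := Real.rpow_pos_of_pos (by norm_num) p
    linarith
  have hL2 : (a:ℝ) ^ 2 ≤ ((1:ℝ) + a ^ p) ^ (2 / p) := by
    rw [← hap_eq]
    apply Real.rpow_le_rpow hap0 (by linarith) hexp0.le
  have hn4 : (0:ℝ) ≤ (n:ℝ) - 4 := by linarith
  have h2' : ((n:ℝ) - 4) * (a ^ 2) ≤ ((n:ℝ) - 4) * ((1:ℝ) + a ^ p) ^ (2 / p) :=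
    mul_le_mul_of_nonneg_left hL2 hn4
  have h3' : a * (((4:ℝ) ^ p + ((n:ℝ) - 3) ^ p) ^ (2 / p)) ≤ a * a ^ 2 :=
    mul_le_mul_of_nonneg_left hR ha0.le
  have : a * a ^ 2 = 2 * a ^ 2 + ((n:ℝ) - 4) * a ^ 2 := by rw [ha]; ring
  linarith
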